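/- Assume in addition that A is a ℚ-algebra. Let S ⊆ ℤ^ℓ × ℕ be a finite subset and suppose given, for each (m,j) ∈ S: an element c_{m,j} ∈ A, an integer K_{m,j} ∈ ℕ, rational numbers C_{m,j,r} for 0 ≤ r ≤ K_{m,j} with C_{m,j,0} ≠ 0, and functions h_{m,j,r} : ℕ^ℓ × ℕ → A with h_{m,j,r}(0,0) = C_{m,j,r}·c_{m,j}. Suppose the total series vanishes identically: for every (b,p) ∈ ℤ^ℓ × ℕ, ∑_{(m,j)∈S} ∑_{r=0}^{K_{m,j}} h_{m,j,r}(b − m − (p−j−r)·k, p−j−r) = 0, where a summand is read as 0 unless p − j − r ≥ 0 and b − m − (p−j−r)·k ∈ ℕ^ℓ. Then: (i) c_{m,j} = 0 for every m ∈ min(π(S)) and every j with (m,j) ∈ S; (ii) c_{m,j} = 0 for every (m,j) ∈ min(S). -/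

import Mathlib

/-- coefficient form of the unnumbered lemma of Section 2.3.3 and of
Lemma 14.5.14.100.  Let `A` be a `ℚ`-algebra.  Suppose given a finite `S ⊆ ℤ^ℓ × ℕ`, and
for each `(m,j) ∈ S`, data `c_{m,j} ∈ A`, `K_{m,j} ∈ ℕ`, rationals `C_{m,j,r}` with
`C_{m,j,0} ≠ 0`, and coefficient functions `h_{m,j,r} : ℕ^ℓ × ℕ → A` with
`h_{m,j,r}(0,0) = C_{m,j,r} · c_{m,j}`.  If the series associated to
`∑_{(m,j) ∈ S} ∑_{r=0}^{K_{m,j}} h_{m,j,r}(x,τ) x^m (τ x^{-k})^{j+r}` vanishes identically,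
then `c_{m,j} = 0` for every `m ∈ min(π(S))` and every `j` with `(m,j) ∈ S`, and
`c_{m,j} = 0` for every `(m,j) ∈ min(S)`. -/
private lemma ratCancel {A : Type*} [CommRing A] [Algebra ℚ A] {q : ℚ} {x : A}
    (hq : q ≠ 0) (hx : algebraMap ℚ A q * x = 0) : x = 0 := by
  have : algebraMap ℚ A q⁻¹ * (algebraMap ℚ A q * x) = x := by
    rw [← mul_assoc, ← map_mul, inv_mul_cancel₀ hq, map_one, one_mul]
  rw [hx, mul_zero] at this
  exact this.symm

theorem leading_coeff_vanishes_at_minimal_indices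
    {ℓ₁ ℓ : ℕ} (h1 : 1 ≤ ℓ₁) (h2 : ℓ₁ ≤ ℓ)
    (k : Fin ℓ → ℕ)
    (hk1 : ∀ i : Fin ℓ, (i : ℕ) < ℓ₁ → 0 < k i)
    (hk2 : ∀ i : Fin ℓ, ℓ₁ ≤ (i : ℕ) → k i = 0)
    {A : Type*} [CommRing A] [Algebra ℚ A]
    (S : Finset ((Fin ℓ → ℤ) × ℕ))
    (c : (Fin ℓ → ℤ) × ℕ → A)
    (K : (Fin ℓ → ℤ) × ℕ → ℕ)
    (C : (Fin ℓ → ℤ) × ℕ → ℕ → ℚ)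
    (h : (Fin ℓ → ℤ) × ℕ → ℕ → ((Fin ℓ → ℕ) × ℕ) → A)
    (hC0 : ∀ mj ∈ S, C mj 0 ≠ 0)
    (hlead : ∀ mj ∈ S, ∀ r : ℕ, r ≤ K mj →
      h mj r (0, 0) = algebraMap ℚ A (C mj r) * c mj)
    (hzero : ∀ b : Fin ℓ → ℤ, ∀ p : ℕ,
      (∑ mj ∈ S, ∑ r ∈ Finset.range (K mj + 1),
        if mj.2 + r ≤ p ∧
            ∀ i, mj.1 i + ((p - mj.2 - r : ℕ) : ℤ) * (k i : ℤ) ≤ b i then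
          h mj r (fun i => (b i - mj.1 i - ((p - mj.2 - r : ℕ) : ℤ) * (k i : ℤ)).toNat,
                   p - mj.2 - r)
        else 0) = 0) :
    (∀ m : Fin ℓ → ℤ, (∃ j, (m, j) ∈ S) →
      (∀ m' : Fin ℓ → ℤ, ∀ j' : ℕ, (m', j') ∈ S → m' ≤ m → m' = m) →
      ∀ j : ℕ, (m, j) ∈ S → c (m, j) = 0) ∧
    (∀ mj ∈ S, (∀ mj' ∈ S, mj' ≤ mj → mj' = mj) → c mj = 0) := by
  have hℓ : 0 < ℓ := lt_of_lt_of_le h1 h2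
  set i₀ : Fin ℓ := ⟨0, hℓ⟩ with hi₀
  have hki₀ : 0 < k i₀ := hk1 i₀ (show (0:ℕ) < ℓ₁ by omega)
  constructor
  · -- part (i)
    intro m _ hmin j
    induction j using Nat.strong_induction_on with
    | _ j IH =>
    intro hj
    -- key identity at (m, p) for p := j
    have key : ∀ p : ℕ, (∑ mj ∈ S, ∑ r ∈ Finset.range (K mj + 1),
        if mj.1 = m ∧ mj.2 + r = p then algebraMap ℚ A (C mj r) * c mj else 0) = 0 := by
      intro p
      refine Eq.trans (Finset.sum_congr rfl fun mj hmj =>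
        Finset.sum_congr rfl fun r hr => ?_) (hzero m p)
      have hrK : r ≤ K mj := by have := Finset.mem_range.mp hr; omega
      have hiff : (mj.2 + r ≤ p ∧
          ∀ i, mj.1 i + ((p - mj.2 - r : ℕ) : ℤ) * (k i : ℤ) ≤ m i) ↔
          (mj.1 = m ∧ mj.2 + r = p) := by
        constructor
        · rintro ⟨hle, hall⟩
          have hle' : mj.1 ≤ m := fun i =>
            le_trans (le_add_of_nonneg_right (by positivity)) (hall i)
          have hm : mj.1 = m := hmin mj.1 mj.2 hmj hle'
          have hq : p - mj.2 - r = 0 := by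
            by_contra hq
            have h0 := hall i₀
            rw [hm] at h0
            have hpos : (0:ℤ) < ((p - mj.2 - r : ℕ) : ℤ) * (k i₀ : ℤ) :=
              mul_pos (by exact_mod_cast Nat.pos_of_ne_zero hq)
                (by exact_mod_cast hki₀)
            linarith
          exact ⟨hm, by omega⟩
        · rintro ⟨hm, hp⟩
          refine ⟨hp.le, fun i => ?_⟩
          have hq : p - mj.2 - r = 0 := by omega
          simp [hq, hm]
      by_cases hc : mj.1 = m ∧ mj.2 + r = p
      · rw [if_pos hc, if_pos (hiff.mpr hc)]
        obtain ⟨hm, hp⟩ := hc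
        have hq : p - mj.2 - r = 0 := by omega
        simp only [hq, Nat.cast_zero, zero_mul, sub_zero, hm, sub_self, Int.toNat_zero]
        exact (hlead mj hmj r hrK).symm
      · rw [if_neg hc, if_neg (fun hh => hc (hiff.mp hh))]
    have hkey := key j
    have hsum : (∑ mj ∈ S, ∑ r ∈ Finset.range (K mj + 1),
        if mj.1 = m ∧ mj.2 + r = j then algebraMap ℚ A (C mj r) * c mj else 0)
        = algebraMap ℚ A (C (m, j) 0) * c (m, j) := by
      rw [Finset.sum_eq_single_of_mem (m, j) hj]
      · rw [Finset.sum_eq_single_of_mem 0 (Finset.mem_range.mpr (Nat.succ_pos _))]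
        · simp
        · intro r _ hr0
          rw [if_neg]
          rintro ⟨-, hp⟩
          omega
      · intro mj hmj hne
        apply Finset.sum_eq_zero
        intro r _
        by_cases hc : mj.1 = m ∧ mj.2 + r = j
        · obtain ⟨hm, hp⟩ := hc
          have hlt : mj.2 < j := by
            rcases Nat.lt_or_ge mj.2 j with hlt | hge
            · exact hlt
            · exfalso
              apply hne
              have h2' : mj.2 = j := by omega
              exact Prod.ext hm h2'
          have hmjeq : mj = (m, mj.2) := Prod.ext hm rfl
          have hc0 : c mj = 0 := by
            rw [hmjeq]
            exact IH mj.2 hlt (hmjeq ▸ hmj)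
          simp [hc0]
        · rw [if_neg hc]
    rw [hsum] at hkey
    exact ratCancel (hC0 (m, j) hj) hkey
  · -- part (ii)
    rintro ⟨m, j⟩ hmj hmin
    have hz := hzero m j
    have hsum : (∑ mj ∈ S, ∑ r ∈ Finset.range (K mj + 1),
        if mj.2 + r ≤ j ∧
            ∀ i, mj.1 i + ((j - mj.2 - r : ℕ) : ℤ) * (k i : ℤ) ≤ m i then
          h mj r (fun i => (m i - mj.1 i - ((j - mj.2 - r : ℕ) : ℤ) * (k i : ℤ)).toNat,
                   j - mj.2 - r)
        else 0) = algebraMap ℚ A (C (m, j) 0) * c (m, j) := by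
      rw [Finset.sum_eq_single_of_mem (m, j) hmj]
      · rw [Finset.sum_eq_single_of_mem 0 (Finset.mem_range.mpr (Nat.succ_pos _))]
        · rw [if_pos]
          · have hq : j - (m, j).2 - 0 = 0 := by omega
            simp only [hq, Nat.cast_zero, zero_mul, sub_zero, sub_self, Int.toNat_zero]
            exact hlead (m, j) hmj 0 (Nat.zero_le _)
          · refine ⟨by omega, fun i => ?_⟩
            have hq : j - (m, j).2 - 0 = 0 := by omega
            simp [hq]
        · intro r _ hr0
          rw [if_neg]
          rintro ⟨hle, -⟩
          simp only at hle
          omega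
      · intro mj' hmj' hne
        apply Finset.sum_eq_zero
        intro r _
        rw [if_neg]
        rintro ⟨hle, hall⟩
        apply hne
        apply hmin mj' hmj'
        constructor
        · intro i
          exact le_trans (le_add_of_nonneg_right (by positivity)) (hall i)
        · exact le_trans (Nat.le_add_right _ _) hle
    rw [hsum] at hz
    exact ratCancel (hC0 (m, j) hmj) hz
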